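/- arXiv:1607.00300 — 3 statements merged into one kernel-verified Lean document; each statement's English description precedes it below -/
import Mathlib

section
/- Let G = (V,A) be a finite simple graph in which every vertex has degree at least 2, n = n(G) = W ⊕ z its graph algebra over a field k of characteristic zero, and δ a nearly coboundary Lie bialgebra structure on n with δ(v) = Σ_{α∈A} D_α(v)∧α + Φ*(v) for v ∈ W. Assume each D_α is diagonal in the vertex basis: D_α(e_i) = λ_{i,α} e_i. If α₀ is an edge joining vertices i₀ and j₀, then λ_{i₀,α} = −λ_{j₀,α} for every edge α ≠ α₀. -/
open TensorProduct

set_option synthInstance.maxHeartbeats 1000000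
set_option maxHeartbeats 1000000

/-- The adjoint action of a Lie algebra `g` on `g ⊗ g`, determined by
`x · (a ⊗ b) = ⁅x,a⁆ ⊗ b + a ⊗ ⁅x,b⁆`. -/
noncomputable def tAct (k g : Type*) [CommRing k] [LieRing g] [LieAlgebra k g] (x : g) :
    g ⊗[k] g →ₗ[k] g ⊗[k] g :=
  TensorProduct.map (LieAlgebra.ad k g x) LinearMap.id
    + TensorProduct.map LinearMap.id (LieAlgebra.ad k g x)

/-- The cyclic rotation `(a⊗b)⊗c ↦ (c⊗a)⊗b` on `(g⊗g)⊗g`. -/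
noncomputable def tCyc (k g : Type*) [CommRing k] [AddCommGroup g] [Module k g] :
    (g ⊗[k] g) ⊗[k] g →ₗ[k] (g ⊗[k] g) ⊗[k] g :=
  ((TensorProduct.assoc k g g g).symm.toLinearMap).comp
    (TensorProduct.comm k (g ⊗[k] g) g).toLinearMap

/-- For submodules `P Q ⊆ g`, the image of `P ⊗ Q` in `g ⊗ g`. -/
noncomputable def tsub (k g : Type*) [CommRing k] [AddCommGroup g] [Module k g]
    (P Q : Submodule k g) : Submodule k (g ⊗[k] g) :=
  LinearMap.range (TensorProduct.map P.subtype Q.subtype)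

/-- The degree (valency) of a vertex `e` in the graph with edge set `A` and
endpoint maps `src`, `tgt`. -/
def deg {V A : Type*} [Fintype A] [DecidableEq V] (src tgt : A → V) (e : V) : ℕ :=
  (Finset.univ.filter (fun a : A => src a = e ∨ tgt a = e)).card

/-- let `G` be a finite simple graph in which every vertex has degree at
least 2, `n = n(G) = W ⊕ z` its graph algebra, and `δ` a nearly coboundary Lie bialgebra
structure on `n` with `δ(v) = Σ_α D_α(v)∧α + Φ*(v)` on `W`, where each `D_α` is diagonal
in the vertex basis, `D_α(e_i) = λ_{i,α} e_i`.  If `α₀` is an edge joining `i₀` and `j₀`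
then `λ_{i₀,α} = -λ_{j₀,α}` for every edge `α ≠ α₀`. -/
theorem stmt16 (k V A N : Type*) [Field k] [CharZero k]
    [Fintype V] [Fintype A] [DecidableEq V] [DecidableEq A]
    [LieRing N] [LieAlgebra k N]
    (src tgt : A → V)
    (hloop : ∀ a, src a ≠ tgt a)
    (hsimple : ∀ a b : A,
      (src a = src b ∧ tgt a = tgt b) ∨ (src a = tgt b ∧ tgt a = src b) → a = b)
    (B : Module.Basis (V ⊕ A) k N)
    (hbz : ∀ (a : A) (x : N), ⁅B (Sum.inr a), x⁆ = 0)
    (hbe : ∀ a : A, ⁅B (Sum.inl (src a)), B (Sum.inl (tgt a))⁆ = B (Sum.inr a))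
    (hbe0 : ∀ i j : V,
      (∀ a : A, ¬((src a = i ∧ tgt a = j) ∨ (src a = j ∧ tgt a = i))) →
      ⁅B (Sum.inl i), B (Sum.inl j)⁆ = 0)
    (hdeg : ∀ e : V, 2 ≤ deg src tgt e)
    (Z : Submodule k N)
    (hZ : Z = Submodule.span k (Set.range fun a : A => B (Sum.inr a)))
    -- δ is a Lie bialgebra structure on n:
    (δ : N →ₗ[k] N ⊗[k] N)
    (hanti : ∀ x, TensorProduct.comm k N N (δ x) = - δ x)
    (hcoJ : ∀ x, (TensorProduct.map δ LinearMap.id) (δ x)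
        + tCyc k N ((TensorProduct.map δ LinearMap.id) (δ x))
        + tCyc k N (tCyc k N ((TensorProduct.map δ LinearMap.id) (δ x))) = 0)
    (hcoc : ∀ x y, δ ⁅x, y⁆ = tAct k N x (δ y) - tAct k N y (δ x))
    -- δ is nearly coboundary:
    (hnc : ∀ z ∈ Z, δ z = 0)
    -- δ on W has the form δ(e_i) = Σ_α λ_{i,α} e_i∧α + Φ*(e_i) (diagonal D_α's):
    (lam : V → A → k)
    (P : V → N ⊗[k] N)
    (hP : ∀ i : V, P i ∈ tsub k N Z Z)
    (hform : ∀ i : V, δ (B (Sum.inl i))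
      = ∑ a : A, lam i a • (B (Sum.inl i) ⊗ₜ[k] B (Sum.inr a)
          - B (Sum.inr a) ⊗ₜ[k] B (Sum.inl i)) + P i)
    (a₀ : A) :
    ∀ a : A, a ≠ a₀ → lam (src a₀) a = - lam (tgt a₀) a := by
  intro a ha
  -- the center annihilates everything on both sides
  have hcen : ∀ (x : N) (b : A), ⁅x, B (Sum.inr b)⁆ = 0 := by
    intro x b; rw [← lie_skew, hbz, neg_zero]
  have hZcentral : ∀ (x : N), ∀ z ∈ Z, ⁅x, z⁆ = 0 := by
    intro x z hz
    rw [hZ] at hz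
    induction hz using Submodule.span_induction with
    | mem y hy => obtain ⟨b, rfl⟩ := hy; exact hcen x b
    | zero => simp
    | add y w _ _ hy hw => rw [lie_add, hy, hw, add_zero]
    | smul c y _ hy => rw [lie_smul, hy, smul_zero]
  have tAct_tmul : ∀ (x u v : N), tAct k N x (u ⊗ₜ[k] v) = ⁅x, u⁆ ⊗ₜ[k] v + u ⊗ₜ[k] ⁅x, v⁆ := by
    intro x u v
    simp [tAct, LieAlgebra.ad_apply]
  have htActP : ∀ (x : N) (i : V), tAct k N x (P i) = 0 := by
    intro x i
    obtain ⟨p, hp⟩ := hP i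
    rw [← hp]
    clear hp
    induction p using TensorProduct.induction_on with
    | zero => simp
    | tmul u v =>
        rw [TensorProduct.map_tmul, tAct_tmul, Submodule.subtype_apply,
          Submodule.subtype_apply, hZcentral x _ u.2, hZcentral x _ v.2,
          TensorProduct.zero_tmul, TensorProduct.tmul_zero, add_zero]
    | add p q hp' hq' => rw [map_add, map_add, hp', hq', add_zero]
  have expand : ∀ (x : N) (i : V),
      tAct k N x (δ (B (Sum.inl i))) =
      ∑ b : A, lam i b • (⁅x, B (Sum.inl i)⁆ ⊗ₜ[k] B (Sum.inr b)
        - B (Sum.inr b) ⊗ₜ[k] ⁅x, B (Sum.inl i)⁆) := by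
    intro x i
    rw [hform, map_add, htActP x i, add_zero, map_sum]
    refine Finset.sum_congr rfl fun b _ => ?_
    rw [map_smul, map_sub, tAct_tmul, tAct_tmul, hcen x b,
      TensorProduct.tmul_zero, TensorProduct.zero_tmul, add_zero, zero_add]
  have hbr : ⁅B (Sum.inl (tgt a₀)), B (Sum.inl (src a₀))⁆ = - B (Sum.inr a₀) := by
    rw [← lie_skew, hbe]
  have hmem : B (Sum.inr a₀) ∈ Z := by
    rw [hZ]; exact Submodule.subset_span ⟨a₀, rfl⟩
  have key : tAct k N (B (Sum.inl (src a₀))) (δ (B (Sum.inl (tgt a₀))))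
      - tAct k N (B (Sum.inl (tgt a₀))) (δ (B (Sum.inl (src a₀)))) = 0 := by
    rw [← hcoc, hbe, hnc _ hmem]
  rw [expand, expand, hbe, hbr] at key
  have hF := congrArg ((Module.Basis.tensorProduct B B).coord (Sum.inr a₀, Sum.inr a)) key
  simp only [map_sub, map_sum, map_smul, Module.Basis.coord_apply,
    TensorProduct.neg_tmul, TensorProduct.tmul_neg, sub_neg_eq_add, map_add, map_neg,
    Module.Basis.tensorProduct_repr_tmul_apply, Module.Basis.repr_self, Finsupp.single_apply,
    Sum.inr.injEq, map_zero] at hF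
  have ha' : ¬ (a₀ = a) := fun h => ha h.symm
  simp only [Finsupp.coe_zero, Pi.zero_apply, smul_eq_mul, ha', if_false, ite_self,
    sub_zero, add_zero, mul_ite, mul_one, mul_zero, mul_neg, neg_zero, one_mul, zero_mul,
    zero_mul, Finset.sum_neg_distrib, Finset.sum_ite_eq', Finset.mem_univ, if_true, sub_eq_zero] at hF
  linear_combination hF
end

section
/- Let G = (V,A) be a finite simple graph in which every vertex has degree at least 2, n = n(G) = W ⊕ z its graph algebra over a field k of characteristic zero, and δ a nearly coboundary Lie bialgebra structure on n with δ(v) = Σ_{α∈A} D_α(v)∧α + Φ*(v) for v ∈ W, where each D_α is diagonal in the vertex basis: D_α(e_i) = λ_{i,α} e_i. Suppose i₀ = i_N, i₁, …, i_{N−1} are vertices forming a closed path in G, with β_k the edge joining i_k and i_{k+1} for 0 ≤ k ≤ N−1, and let α be an edge of G distinct from all the β_k. Then λ_{i₀,α} = (−1)^N λ_{i₀,α}; in particular, if N is odd then λ_{i₀,α} = 0. -/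
open TensorProduct

set_option synthInstance.maxHeartbeats 1000000
set_option maxHeartbeats 1000000

/-- let `G` be a finite simple graph in which every vertex has degree at
least 2, `n = n(G) = W ⊕ z` its graph algebra, and `δ` a nearly coboundary Lie bialgebra
structure with diagonal `D_α`'s (`D_α(e_i) = λ_{i,α} e_i`).  If `i₀ = i_M, i₁, …, i_{M−1}`
is a closed path in `G`, with `β_m` the edge joining `i_m` and `i_{m+1}`, and `α` is an
edge distinct from all the `β_m`, then `λ_{i₀,α} = (−1)^M λ_{i₀,α}`; in particular if
`M` is odd then `λ_{i₀,α} = 0`. -/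
theorem stmt17 (k V A N : Type*) [Field k] [CharZero k]
    [Fintype V] [Fintype A] [DecidableEq V] [DecidableEq A]
    [LieRing N] [LieAlgebra k N]
    (src tgt : A → V)
    (hloop : ∀ a, src a ≠ tgt a)
    (hsimple : ∀ a b : A,
      (src a = src b ∧ tgt a = tgt b) ∨ (src a = tgt b ∧ tgt a = src b) → a = b)
    (B : Module.Basis (V ⊕ A) k N)
    (hbz : ∀ (a : A) (x : N), ⁅B (Sum.inr a), x⁆ = 0)
    (hbe : ∀ a : A, ⁅B (Sum.inl (src a)), B (Sum.inl (tgt a))⁆ = B (Sum.inr a))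
    (hbe0 : ∀ i j : V,
      (∀ a : A, ¬((src a = i ∧ tgt a = j) ∨ (src a = j ∧ tgt a = i))) →
      ⁅B (Sum.inl i), B (Sum.inl j)⁆ = 0)
    (hdeg : ∀ e : V, 2 ≤ deg src tgt e)
    (Z : Submodule k N)
    (hZ : Z = Submodule.span k (Set.range fun a : A => B (Sum.inr a)))
    -- δ is a Lie bialgebra structure on n:
    (δ : N →ₗ[k] N ⊗[k] N)
    (hanti : ∀ x, TensorProduct.comm k N N (δ x) = - δ x)
    (hcoJ : ∀ x, (TensorProduct.map δ LinearMap.id) (δ x)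
        + tCyc k N ((TensorProduct.map δ LinearMap.id) (δ x))
        + tCyc k N (tCyc k N ((TensorProduct.map δ LinearMap.id) (δ x))) = 0)
    (hcoc : ∀ x y, δ ⁅x, y⁆ = tAct k N x (δ y) - tAct k N y (δ x))
    -- δ is nearly coboundary:
    (hnc : ∀ z ∈ Z, δ z = 0)
    -- δ on W has the form δ(e_i) = Σ_α λ_{i,α} e_i∧α + Φ*(e_i) (diagonal D_α's):
    (lam : V → A → k)
    (P : V → N ⊗[k] N)
    (hP : ∀ i : V, P i ∈ tsub k N Z Z)
    (hform : ∀ i : V, δ (B (Sum.inl i))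
      = ∑ a : A, lam i a • (B (Sum.inl i) ⊗ₜ[k] B (Sum.inr a)
          - B (Sum.inr a) ⊗ₜ[k] B (Sum.inl i)) + P i)
    -- a closed path i₀ = i_M, i₁, …, i_{M−1} with edges β_m joining i_m and i_{m+1}:
    (M : ℕ) (vs : ℕ → V) (hcl : vs M = vs 0)
    (β : ℕ → A)
    (hpath : ∀ m < M, (src (β m) = vs m ∧ tgt (β m) = vs (m + 1))
      ∨ (src (β m) = vs (m + 1) ∧ tgt (β m) = vs m))
    -- an edge α distinct from all the β_m:
    (α : A) (hα : ∀ m < M, α ≠ β m) :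
    lam (vs 0) α = (-1 : k) ^ M * lam (vs 0) α
    ∧ (Odd M → lam (vs 0) α = 0) := by
  classical
  have hZmem : ∀ a : A, B (Sum.inr a) ∈ Z := by
    intro a; rw [hZ]; exact Submodule.subset_span ⟨a, rfl⟩
  have hxz : ∀ (x z : N), z ∈ Z → ⁅x, z⁆ = 0 := by
    intro x z hz
    rw [hZ] at hz
    induction hz using Submodule.span_induction with
    | mem w hw => obtain ⟨a, rfl⟩ := hw; rw [← lie_skew, hbz, neg_zero]
    | zero => exact lie_zero x
    | add _ _ _ _ h1 h2 => rw [lie_add, h1, h2, add_zero]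
    | smul c _ _ h => rw [lie_smul, h, smul_zero]
  have hactP : ∀ (x : N) (p : N ⊗[k] N), p ∈ tsub k N Z Z → tAct k N x p = 0 := by
    intro x p hp
    obtain ⟨t, rfl⟩ := hp
    induction t using TensorProduct.induction_on with
    | zero => simp
    | tmul z1 z2 =>
        simp [tAct, TensorProduct.map_tmul, LieAlgebra.ad_apply,
          hxz x _ z1.2, hxz x _ z2.2]
    | add s t hs ht => simp only [map_add, hs, ht, add_zero]
  have hactT : ∀ (x y : N) (a : A),
      tAct k N x (y ⊗ₜ[k] B (Sum.inr a) - B (Sum.inr a) ⊗ₜ[k] y)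
        = ⁅x, y⁆ ⊗ₜ[k] B (Sum.inr a) - B (Sum.inr a) ⊗ₜ[k] ⁅x, y⁆ := by
    intro x y a
    simp only [tAct, LinearMap.add_apply, map_sub, TensorProduct.map_tmul,
      LieAlgebra.ad_apply, LinearMap.id_apply, hxz x _ (hZmem a),
      TensorProduct.zero_tmul, TensorProduct.tmul_zero]
    abel
  have key : ∀ b a : A, a ≠ b → lam (src b) a + lam (tgt b) a = 0 := by
    intro b a hab
    have hbZ : δ (B (Sum.inr b)) = 0 := hnc _ (hZmem b)
    have hc := hcoc (B (Sum.inl (src b))) (B (Sum.inl (tgt b)))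
    rw [hbe b, hbZ] at hc
    have e1 : tAct k N (B (Sum.inl (src b))) (δ (B (Sum.inl (tgt b))))
        = ∑ a' : A, lam (tgt b) a' • (B (Sum.inr b) ⊗ₜ[k] B (Sum.inr a')
            - B (Sum.inr a') ⊗ₜ[k] B (Sum.inr b)) := by
      rw [hform (tgt b), map_add, hactP _ _ (hP (tgt b)), add_zero, map_sum]
      refine Finset.sum_congr rfl fun a' _ => ?_
      rw [map_smul, hactT, hbe b]
    have e2 : tAct k N (B (Sum.inl (tgt b))) (δ (B (Sum.inl (src b))))
        = ∑ a' : A, (- lam (src b) a') • (B (Sum.inr b) ⊗ₜ[k] B (Sum.inr a')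
            - B (Sum.inr a') ⊗ₜ[k] B (Sum.inr b)) := by
      rw [hform (src b), map_add, hactP _ _ (hP (src b)), add_zero, map_sum]
      refine Finset.sum_congr rfl fun a' _ => ?_
      rw [map_smul, hactT]
      have hsk : ⁅B (Sum.inl (tgt b)), B (Sum.inl (src b))⁆ = - B (Sum.inr b) := by
        rw [← lie_skew, hbe b]
      rw [hsk]
      simp only [TensorProduct.neg_tmul, TensorProduct.tmul_neg, sub_neg_eq_add,
        neg_smul, smul_sub, smul_add, smul_neg]
    rw [e1, e2, ← Finset.sum_sub_distrib] at hc
    have hc2 : (0 : N ⊗[k] N)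
        = ∑ a' : A, (lam (src b) a' + lam (tgt b) a') •
            (B (Sum.inr b) ⊗ₜ[k] B (Sum.inr a') - B (Sum.inr a') ⊗ₜ[k] B (Sum.inr b)) := by
      rw [hc]
      refine Finset.sum_congr rfl fun a' _ => ?_
      rw [← sub_smul, sub_neg_eq_add, add_comm]
    have hco := congrArg
      (fun x => ((Module.Basis.tensorProduct B B).repr x) (Sum.inr b, Sum.inr a)) hc2
    simp only [map_zero, Finsupp.coe_zero, Pi.zero_apply, map_sum, map_smul, map_sub,
      Finsupp.coe_finset_sum, Finset.sum_apply, Finsupp.coe_smul, Pi.smul_apply,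
      Finsupp.sub_apply, Module.Basis.tensorProduct_repr_tmul_apply, Module.Basis.repr_self,
      Finsupp.single_apply, smul_eq_mul] at hco
    rw [eq_comm] at hco
    rw [Finset.sum_eq_single a] at hco
    · simpa [hab, Ne.symm hab] using hco
    · intro b' _ hb'
      simp [hb', Ne.symm hab]
    · intro h; exact absurd (Finset.mem_univ a) h
  have hstep : ∀ m, m < M → lam (vs (m + 1)) α = - lam (vs m) α := by
    intro m hm
    have hk := key (β m) α (hα m hm)
    rcases hpath m hm with ⟨h1, h2⟩ | ⟨h1, h2⟩
    · rw [h1, h2] at hk; linear_combination hk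
    · rw [h1, h2] at hk; linear_combination hk
  have hiter : ∀ m, m ≤ M → lam (vs m) α = (-1 : k) ^ m * lam (vs 0) α := by
    intro m
    induction m with
    | zero => intro _; simp
    | succ n ih =>
        intro h
        rw [hstep n (by omega), ih (by omega), pow_succ]
        ring
  have hmain : lam (vs 0) α = (-1 : k) ^ M * lam (vs 0) α := by
    conv_lhs => rw [← hcl]
    exact hiter M le_rfl
  refine ⟨hmain, fun hodd => ?_⟩
  rw [hodd.neg_one_pow] at hmain
  have h2 : (2 : k) * lam (vs 0) α = 0 := by linear_combination hmain
  rcases mul_eq_zero.mp h2 with h | h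
  · exact absurd h two_ne_zero
  · exact h
end

section
/- Let n ≥ 4 and let f_n be the free 2-step nilpotent Lie algebra on n generators over a field k of characteristic zero, realized as the graph algebra of the complete graph K_n, with f_n = W ⊕ z where W is spanned by the vertices and z by the edges. Let δ be a nearly coboundary Lie bialgebra structure on f_n (δ|_z = 0) written as δ(v) = Σ_{α} D_α(v)∧α + Φ*(v) for v ∈ W, and assume each D_α is diagonal in the vertex basis. Then D_α = 0 for every edge α; that is, δ(W) ⊆ Λ²z, so δ(e_i) = ω_i for some ω_i ∈ Λ²z. -/
open TensorProduct

set_option synthInstance.maxHeartbeats 1000000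
set_option maxHeartbeats 1000000

/-- let `f_n` (`n ≥ 4`) be the free 2-step nilpotent Lie algebra on `n`
generators, realized as the graph algebra of the complete graph `K_n` (every pair of
distinct vertices is joined by an edge, and there are `n ≥ 4` vertices), with
`f_n = W ⊕ z`.  If `δ` is a nearly coboundary Lie bialgebra structure on `f_n` written as
`δ(v) = Σ_α D_α(v)∧α + Φ*(v)` on `W` with each `D_α` diagonal in the vertex basis
(`D_α(e_i) = λ_{i,α} e_i`), then all `D_α = 0` (all eigenvalues vanish); that is,
`δ(W) ⊆ Λ²z`, so `δ(e_i) = ω_i` for some `ω_i ∈ Λ²z`. -/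
theorem stmt18 (k V A N : Type*) [Field k] [CharZero k]
    [Fintype V] [Fintype A] [DecidableEq V] [DecidableEq A]
    [LieRing N] [LieAlgebra k N]
    (src tgt : A → V)
    (hloop : ∀ a, src a ≠ tgt a)
    (hsimple : ∀ a b : A,
      (src a = src b ∧ tgt a = tgt b) ∨ (src a = tgt b ∧ tgt a = src b) → a = b)
    (B : Module.Basis (V ⊕ A) k N)
    (hbz : ∀ (a : A) (x : N), ⁅B (Sum.inr a), x⁆ = 0)
    (hbe : ∀ a : A, ⁅B (Sum.inl (src a)), B (Sum.inl (tgt a))⁆ = B (Sum.inr a))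
    (hbe0 : ∀ i j : V,
      (∀ a : A, ¬((src a = i ∧ tgt a = j) ∨ (src a = j ∧ tgt a = i))) →
      ⁅B (Sum.inl i), B (Sum.inl j)⁆ = 0)
    -- the graph is the complete graph K_n on n ≥ 4 vertices:
    (hcomplete : ∀ i j : V, i ≠ j → ∃ a : A,
      (src a = i ∧ tgt a = j) ∨ (src a = j ∧ tgt a = i))
    (hcard : 4 ≤ Fintype.card V)
    (Z : Submodule k N)
    (hZ : Z = Submodule.span k (Set.range fun a : A => B (Sum.inr a)))
    -- δ is a Lie bialgebra structure on n:
    (δ : N →ₗ[k] N ⊗[k] N)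
    (hanti : ∀ x, TensorProduct.comm k N N (δ x) = - δ x)
    (hcoJ : ∀ x, (TensorProduct.map δ LinearMap.id) (δ x)
        + tCyc k N ((TensorProduct.map δ LinearMap.id) (δ x))
        + tCyc k N (tCyc k N ((TensorProduct.map δ LinearMap.id) (δ x))) = 0)
    (hcoc : ∀ x y, δ ⁅x, y⁆ = tAct k N x (δ y) - tAct k N y (δ x))
    -- δ is nearly coboundary:
    (hnc : ∀ z ∈ Z, δ z = 0)
    -- δ on W has the form δ(e_i) = Σ_α λ_{i,α} e_i∧α + Φ*(e_i) (diagonal D_α's):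
    (lam : V → A → k)
    (P : V → N ⊗[k] N)
    (hP : ∀ i : V, P i ∈ tsub k N Z Z)
    (hform : ∀ i : V, δ (B (Sum.inl i))
      = ∑ a : A, lam i a • (B (Sum.inl i) ⊗ₜ[k] B (Sum.inr a)
          - B (Sum.inr a) ⊗ₜ[k] B (Sum.inl i)) + P i)
    :
    (∀ (i : V) (a : A), lam i a = 0)
    ∧ (∀ i : V, δ (B (Sum.inl i)) ∈ tsub k N Z Z) := by
  
  classical
  have hZmem : ∀ a : A, B (Sum.inr a) ∈ Z := by
    intro a; rw [hZ]; exact Submodule.subset_span ⟨a, rfl⟩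
  have hcentl : ∀ (z : N), z ∈ Z → ∀ x : N, ⁅z, x⁆ = 0 := by
    intro z hz
    rw [hZ] at hz
    induction hz using Submodule.span_induction with
    | mem w hw => obtain ⟨a, rfl⟩ := hw; exact fun x => hbz a x
    | zero => intro x; simp
    | add u v _ _ hu hv => intro x; rw [add_lie, hu, hv, add_zero]
    | smul c u _ hu => intro x; rw [smul_lie, hu, smul_zero]
  have hcent : ∀ (x z : N), z ∈ Z → ⁅x, z⁆ = 0 := by
    intro x z hz
    rw [← lie_skew, hcentl z hz, neg_zero]
  have tAct_tmul : ∀ (x u v : N),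
      tAct k N x (u ⊗ₜ[k] v) = ⁅x, u⁆ ⊗ₜ[k] v + u ⊗ₜ[k] ⁅x, v⁆ := by
    intro x u v
    simp [tAct, TensorProduct.map_tmul, LieAlgebra.ad_apply]
  have tActZ : ∀ (x : N) (p : N ⊗[k] N), p ∈ tsub k N Z Z → tAct k N x p = 0 := by
    intro x p hp
    obtain ⟨q, rfl⟩ := hp
    induction q using TensorProduct.induction_on with
    | zero => simp
    | tmul u v =>
        have h1 := hcent x (Z.subtype u) u.2
        have h2 := hcent x (Z.subtype v) v.2
        rw [TensorProduct.map_tmul, tAct_tmul, h1, h2,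
          TensorProduct.zero_tmul, TensorProduct.tmul_zero, add_zero]
    | add u v hu hv => rw [map_add, map_add, hu, hv, add_zero]
  have comp : ∀ (x y : V) (a : A) (c : k),
      ⁅B (Sum.inl x), B (Sum.inl y)⁆ = c • B (Sum.inr a) →
      tAct k N (B (Sum.inl x)) (δ (B (Sum.inl y)))
        = ∑ β : A, (c * lam y β) •
            (B (Sum.inr a) ⊗ₜ[k] B (Sum.inr β) - B (Sum.inr β) ⊗ₜ[k] B (Sum.inr a)) := by
    intro x y a c hxy
    rw [hform y, map_add, tActZ (B (Sum.inl x)) (P y) (hP y), add_zero, map_sum]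
    refine Finset.sum_congr rfl fun β _ => ?_
    rw [map_smul, map_sub, tAct_tmul, tAct_tmul, hxy, hcent _ _ (hZmem β),
      TensorProduct.tmul_zero, TensorProduct.zero_tmul, add_zero, zero_add,
      ← TensorProduct.smul_tmul', TensorProduct.tmul_smul, ← smul_sub, smul_smul,
      mul_comm]
  have key : ∀ (i j : V), i ≠ j → ∀ a : A,
      ((src a = i ∧ tgt a = j) ∨ (src a = j ∧ tgt a = i)) →
      ∀ β : A, β ≠ a → lam i β + lam j β = 0 := by
    intro i j hij a ha β hβ
    obtain ⟨ε, hε, hlie⟩ : ∃ ε : k, ε ≠ 0 ∧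
        ⁅B (Sum.inl i), B (Sum.inl j)⁆ = ε • B (Sum.inr a) := by
      rcases ha with ⟨h1, h2⟩ | ⟨h1, h2⟩
      · exact ⟨1, one_ne_zero, by rw [one_smul, ← h1, ← h2]; exact hbe a⟩
      · refine ⟨-1, neg_ne_zero.mpr one_ne_zero, ?_⟩
        rw [← lie_skew, ← h1, ← h2, hbe a, neg_smul, one_smul]
    have hlie' : ⁅B (Sum.inl j), B (Sum.inl i)⁆ = (-ε) • B (Sum.inr a) := by
      rw [← lie_skew, hlie, neg_smul]
    have h0 : tAct k N (B (Sum.inl i)) (δ (B (Sum.inl j)))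
        - tAct k N (B (Sum.inl j)) (δ (B (Sum.inl i))) = 0 := by
      rw [← hcoc]
      exact hnc _ (by rw [hlie]; exact Z.smul_mem ε (hZmem a))
    rw [comp i j a ε hlie, comp j i a (-ε) hlie'] at h0
    set L : N ⊗[k] N →ₗ[k] k :=
      (Finsupp.lapply ((Sum.inr a : V ⊕ A), (Sum.inr β : V ⊕ A))).comp
        (Module.Basis.tensorProduct B B).repr.toLinearMap with hL
    have LT : ∀ γ : A,
        L (B (Sum.inr a) ⊗ₜ[k] B (Sum.inr γ) - B (Sum.inr γ) ⊗ₜ[k] B (Sum.inr a))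
          = if γ = β then 1 else 0 := by
      intro γ
      have hane : a ≠ β := fun h => hβ h.symm
      simp [hL, Finsupp.lapply_apply, Module.Basis.tensorProduct_repr_tmul_apply,
        Module.Basis.repr_self, Finsupp.single_apply, Sum.inr.injEq, hane]
    have h1 := congrArg L h0
    simp only [map_sub, map_sum, map_zero, map_smul, LT, smul_eq_mul,
      mul_ite, mul_one, mul_zero, Finset.sum_ite_eq', Finset.mem_univ,
      if_true] at h1
    have h2 : ε * (lam i β + lam j β) = 0 := by linear_combination h1
    rcases mul_eq_zero.mp h2 with h | h
    · exact absurd h hε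
    · exact h
  have key2 : ∀ (β : A) (i j : V), i ≠ j →
      ¬((i = src β ∧ j = tgt β) ∨ (i = tgt β ∧ j = src β)) →
      lam i β + lam j β = 0 := by
    intro β i j hij hne
    obtain ⟨a, ha⟩ := hcomplete i j hij
    refine key i j hij a ha β ?_
    rintro rfl
    apply hne
    rcases ha with ⟨h1, h2⟩ | ⟨h1, h2⟩
    · exact Or.inl ⟨h1.symm, h2.symm⟩
    · exact Or.inr ⟨h2.symm, h1.symm⟩
  have lamzero : ∀ (i : V) (β : A), lam i β = 0 := by
    intro i β
    have hpq : src β ≠ tgt β := hloop β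
    have hcard2 : 1 < (({src β, tgt β} : Finset V)ᶜ).card := by
      have h1 : ({src β, tgt β} : Finset V).card ≤ 2 :=
        (Finset.card_insert_le _ _).trans (by simp)
      have h2 := Finset.card_compl ({src β, tgt β} : Finset V)
      omega
    obtain ⟨r, hr, s, hs, hrs⟩ := Finset.one_lt_card.mp hcard2
    simp only [Finset.mem_compl, Finset.mem_insert, Finset.mem_singleton, not_or] at hr hs
    obtain ⟨hrp, hrq⟩ := hr
    obtain ⟨hsp, hsq⟩ := hs
    have hpair : ∀ (x y : V), x ≠ y → y ≠ src β → y ≠ tgt β →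
        lam x β + lam y β = 0 := by
      intro x y hxy hyp hyq
      refine key2 β x y hxy ?_
      rintro (⟨h1, h2⟩ | ⟨h1, h2⟩)
      · exact hyq h2
      · exact hyp h2
    have h1 := hpair (src β) r (Ne.symm hrp) hrp hrq
    have h2 := hpair (src β) s (Ne.symm hsp) hsp hsq
    have h3 := hpair r s hrs hsp hsq
    have hr0 : lam r β = 0 := by
      have h4 : 2 * lam r β = 0 := by linear_combination h1 + h3 - h2
      rcases mul_eq_zero.mp h4 with h | h
      · exact absurd h two_ne_zero
      · exact h
    by_cases hir : i = r
    · rw [hir]; exact hr0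
    · have h5 := hpair i r hir hrp hrq
      rw [hr0, add_zero] at h5
      exact h5
  refine ⟨lamzero, fun i => ?_⟩
  rw [hform i]
  simp only [lamzero, zero_smul, Finset.sum_const_zero, zero_add]
  exact hP i
end
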